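/- (Key one-step implication for ISTC) Let Ψ ∈ ℝ^{n×p} have unit-norm columns with mutual coherence μ satisfying μ·s < 1/2, where x† ∈ ℝ^p has support A† with |A†| = s ≥ 1, and y = Ψ x† + η with ‖η‖₂ ≤ ε. Let C₁ > 1/(1 − 2μs), set α = (1 − 1/C₁)/(μs), let γ ∈ [2μs/(1 − 1/C₁), 1), and let λ ≥ C₁ ε. If x ∈ ℝ^p satisfies supp(x) ⊂ A† and ‖x − x†‖_{ℓ∞} ≤ α λ, then the one-step soft-thresholding update x⁺ = S_λ(x + Ψᵗ(y − Ψ x)) satisfies supp(x⁺) ⊂ A† and ‖x⁺ − x†‖_{ℓ∞} ≤ α γ λ. -/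

import Mathlib

open Finset Matrix

/-- The soft-thresholding operator `S_λ(t) = sgn(t) · max(|t| − λ, 0)`. -/
noncomputable def softThresh (lam t : ℝ) : ℝ := Real.sign t * max (|t| - lam) 0

lemma softThresh_eq_zero {lam t : ℝ} (h : |t| ≤ lam) : softThresh lam t = 0 := by
  simp [softThresh, max_eq_right (sub_nonpos.2 h)]

lemma abs_softThresh_sub_le {lam t : ℝ} (h : 0 ≤ lam) : |softThresh lam t - t| ≤ lam := by
  unfold softThresh
  rcases le_total (|t|) lam with h1 | h1
  · rw [max_eq_right (sub_nonpos.2 h1), mul_zero, zero_sub, abs_neg]; exact h1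
  · rw [max_eq_left (sub_nonneg.2 h1)]
    rcases lt_trichotomy t 0 with ht | ht | ht
    · rw [Real.sign_of_neg ht, abs_of_neg ht]
      have : (-1 : ℝ) * (-t - lam) - t = lam := by ring
      rw [this, abs_of_nonneg h]
    · subst ht; simpa using h
    · rw [Real.sign_of_pos ht, abs_of_pos ht]
      have : (1 : ℝ) * (t - lam) - t = -lam := by ring
      rw [this, abs_neg, abs_of_nonneg h]

lemma swap_sum_aux {n p : ℕ} (Ψ : Matrix (Fin n) (Fin p) ℝ) (i : Fin p) (v : Fin p → ℝ) :
    ∑ k, Ψ k i * ∑ j, Ψ k j * v j = ∑ j, (∑ k, Ψ k i * Ψ k j) * v j := by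
  simp_rw [Finset.mul_sum, Finset.sum_mul]
  rw [Finset.sum_comm]
  simp_rw [mul_assoc]

theorem soft_step_key_implication {n p : ℕ} (Ψ : Matrix (Fin n) (Fin p) ℝ)
    (μ ε C₁ α γ lam : ℝ) (s : ℕ)
    (xdag : Fin p → ℝ) (η y : Fin n → ℝ) (Adag : Finset (Fin p))
    (hcol : ∀ i, ∑ k, Ψ k i ^ 2 = 1)
    (hcoh : ∀ i j, i ≠ j → |∑ k, Ψ k i * Ψ k j| ≤ μ) (hμpos : 0 < μ)
    (hsuppdag : Function.support xdag = (Adag : Set (Fin p)))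
    (hcard : Adag.card = s) (hs : 1 ≤ s) (hμs : μ * s < 1 / 2)
    (hy : y = Ψ.mulVec xdag + η)
    (hη : Real.sqrt (∑ k, η k ^ 2) ≤ ε)
    (hC : 1 / (1 - 2 * μ * s) < C₁)
    (hα : α = (1 - 1 / C₁) / (μ * s))
    (hγ : γ ∈ Set.Ico (2 * μ * s / (1 - 1 / C₁)) 1)
    (hlam : C₁ * ε ≤ lam)
    (x : Fin p → ℝ)
    (hsupp : Function.support x ⊆ (Adag : Set (Fin p)))
    (hE : ‖x - xdag‖ ≤ α * lam) :
    Function.support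
        (fun i => softThresh lam (x i + Ψ.transpose.mulVec (y - Ψ.mulVec x) i))
      ⊆ (Adag : Set (Fin p)) ∧
    ‖(fun i => softThresh lam (x i + Ψ.transpose.mulVec (y - Ψ.mulVec x) i)) - xdag‖
      ≤ α * γ * lam := by
  -- basic numeric facts
  have hs1 : (1 : ℝ) ≤ (s : ℝ) := by exact_mod_cast hs
  have hμs0 : 0 < μ * s := mul_pos hμpos (by linarith)
  have h2μs : 0 < 1 - 2 * μ * s := by linarith
  have hC1 : 1 < C₁ := lt_of_le_of_lt (by rw [le_div_iff₀ h2μs]; linarith) hC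
  have hC1pos : (0 : ℝ) < C₁ := by linarith
  have hc1' : 0 < 1 - 1 / C₁ := by
    have : 1 / C₁ < 1 := by rw [div_lt_one hC1pos]; exact hC1
    linarith
  have hεnn : 0 ≤ ε := le_trans (Real.sqrt_nonneg _) hη
  have hlam0 : 0 ≤ lam := le_trans (by positivity) hlam
  have hαpos : 0 < α := by rw [hα]; exact div_pos hc1' hμs0
  have hαμs : α * (μ * s) = 1 - 1 / C₁ := by
    rw [hα]; field_simp
  have hγ2 : 2 ≤ α * γ := by
    have hg : 2 * μ * s ≤ γ * (1 - 1 / C₁) := (div_le_iff₀ hc1').1 hγ.1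
    have he : α * γ * (μ * s) = γ * (1 - 1 / C₁) := by rw [← hαμs]; ring
    have h2' : 2 * (μ * s) ≤ α * γ * (μ * s) := by rw [he]; linarith
    exact le_of_mul_le_mul_right h2' hμs0
  -- entrywise bound on x - xdag
  have hEj : ∀ j, |xdag j - x j| ≤ α * lam := by
    intro j
    rw [abs_sub_comm]
    exact le_trans (by simpa using norm_le_pi_norm (x - xdag) j) hE
  -- difference vanishes off Adag
  have hd : ∀ j, j ∉ Adag → xdag j - x j = 0 := by
    intro j hj
    have h1 : xdag j = 0 := by
      by_contra h0
      exact hj (by simpa [hsuppdag] using Function.mem_support.2 h0 :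
        j ∈ (Adag : Set (Fin p)))
    have h2 : x j = 0 := by
      by_contra h0
      exact hj (hsupp (Function.mem_support.2 h0))
    rw [h1, h2, sub_zero]
  -- key identity for the update
  have hkey : ∀ i, (x i + Ψ.transpose.mulVec (y - Ψ.mulVec x) i) - xdag i
      = (∑ j ∈ Adag.erase i, (∑ k, Ψ k i * Ψ k j) * (xdag j - x j))
        + ∑ k, Ψ k i * η k := by
    intro i
    have h1 : Ψ.transpose.mulVec (y - Ψ.mulVec x) i
        = (∑ j, (∑ k, Ψ k i * Ψ k j) * (xdag j - x j)) + ∑ k, Ψ k i * η k := by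
      subst hy
      simp only [Matrix.mulVec, Matrix.transpose_apply, dotProduct, Pi.add_apply,
        Pi.sub_apply]
      have hper : ∀ k, Ψ k i * ((∑ j, Ψ k j * xdag j) + η k - ∑ j, Ψ k j * x j)
          = Ψ k i * (∑ j, Ψ k j * (xdag j - x j)) + Ψ k i * η k := by
        intro k
        have : (∑ j, Ψ k j * xdag j) - ∑ j, Ψ k j * x j
            = ∑ j, Ψ k j * (xdag j - x j) := by
          rw [← Finset.sum_sub_distrib]; congr 1; ext j; ring
        rw [show (∑ j, Ψ k j * xdag j) + η k - ∑ j, Ψ k j * x j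
            = ((∑ j, Ψ k j * xdag j) - ∑ j, Ψ k j * x j) + η k by ring, this]
        ring
      rw [Finset.sum_congr rfl fun k _ => hper k, Finset.sum_add_distrib,
        swap_sum_aux]
    rw [h1]
    have h2 : (∑ j, (∑ k, Ψ k i * Ψ k j) * (xdag j - x j))
        = (xdag i - x i) + ∑ j ∈ Finset.univ.erase i,
            (∑ k, Ψ k i * Ψ k j) * (xdag j - x j) := by
      rw [← Finset.add_sum_erase _ _ (Finset.mem_univ i)]
      congr 1
      have : (∑ k, Ψ k i * Ψ k i) = 1 := by
        rw [← hcol i]; congr 1; ext k; ring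
      rw [this, one_mul]
    have h3 : (∑ j ∈ Finset.univ.erase i, (∑ k, Ψ k i * Ψ k j) * (xdag j - x j))
        = ∑ j ∈ Adag.erase i, (∑ k, Ψ k i * Ψ k j) * (xdag j - x j) := by
      refine (Finset.sum_subset (Finset.erase_subset_erase i (Finset.subset_univ _))
        ?_).symm
      intro j hj hj'
      have hji : j ≠ i := Finset.ne_of_mem_erase hj
      have : j ∉ Adag := fun hmem => hj' (Finset.mem_erase.2 ⟨hji, hmem⟩)
      rw [hd j this, mul_zero]
    rw [h2, h3]; ring
  -- noise bound via Cauchy-Schwarz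
  have hnoise : ∀ i, |∑ k, Ψ k i * η k| ≤ ε := by
    intro i
    have hcs : (∑ k, Ψ k i * η k) ^ 2 ≤ (∑ k, Ψ k i ^ 2) * ∑ k, η k ^ 2 :=
      Finset.sum_mul_sq_le_sq_mul_sq Finset.univ _ _
    rw [hcol i, one_mul] at hcs
    calc |∑ k, Ψ k i * η k| = Real.sqrt ((∑ k, Ψ k i * η k) ^ 2) :=
          (Real.sqrt_sq_eq_abs _).symm
      _ ≤ Real.sqrt (∑ k, η k ^ 2) := Real.sqrt_le_sqrt hcs
      _ ≤ ε := hη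
  -- entrywise bound on the pre-threshold error
  have hEi : ∀ i, |(x i + Ψ.transpose.mulVec (y - Ψ.mulVec x) i) - xdag i| ≤ lam := by
    intro i
    rw [hkey i]
    have hS : |∑ j ∈ Adag.erase i, (∑ k, Ψ k i * Ψ k j) * (xdag j - x j)|
        ≤ (s : ℝ) * (μ * (α * lam)) := by
      calc |∑ j ∈ Adag.erase i, (∑ k, Ψ k i * Ψ k j) * (xdag j - x j)|
          ≤ ∑ j ∈ Adag.erase i, |(∑ k, Ψ k i * Ψ k j) * (xdag j - x j)| :=
            Finset.abs_sum_le_sum_abs _ _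
        _ ≤ ∑ _j ∈ Adag.erase i, μ * (α * lam) := by
            refine Finset.sum_le_sum fun j hj => ?_
            rw [abs_mul]
            exact mul_le_mul (hcoh i j (Finset.ne_of_mem_erase hj).symm) (hEj j)
              (abs_nonneg _) hμpos.le
        _ = (Adag.erase i).card * (μ * (α * lam)) := by
            rw [Finset.sum_const, nsmul_eq_mul]
        _ ≤ (s : ℝ) * (μ * (α * lam)) := by
            have hcard' : ((Adag.erase i).card : ℝ) ≤ (s : ℝ) := by
              have := Finset.card_erase_le (a := i) (s := Adag)
              exact_mod_cast le_trans this (le_of_eq hcard)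
            exact mul_le_mul_of_nonneg_right hcard' (by positivity)
    have hε' : ε ≤ lam / C₁ := by rw [le_div_iff₀ hC1pos]; linarith [hlam]
    have harith : (s : ℝ) * (μ * (α * lam)) + ε ≤ lam := by
      have h1 : (s : ℝ) * (μ * (α * lam)) = (1 - 1 / C₁) * lam := by
        rw [← hαμs]; ring
      have h2 : (1 - 1 / C₁) * lam + lam / C₁ = lam := by field_simp; ring
      linarith
    calc |(∑ j ∈ Adag.erase i, (∑ k, Ψ k i * Ψ k j) * (xdag j - x j))
          + ∑ k, Ψ k i * η k|
        ≤ |∑ j ∈ Adag.erase i, (∑ k, Ψ k i * Ψ k j) * (xdag j - x j)|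
          + |∑ k, Ψ k i * η k| := abs_add_le _ _
      _ ≤ (s : ℝ) * (μ * (α * lam)) + ε := add_le_add hS (hnoise i)
      _ ≤ lam := harith
  constructor
  · intro i hi
    by_contra hmem
    have hx0 : xdag i = 0 := by
      by_contra h0
      exact hmem (by simpa [hsuppdag] using Function.mem_support.2 h0 :
        i ∈ (Adag : Set (Fin p)))
    have : |x i + Ψ.transpose.mulVec (y - Ψ.mulVec x) i| ≤ lam := by
      have := hEi i; rwa [hx0, sub_zero] at this
    exact hi (softThresh_eq_zero this)
  · have halgl : 0 ≤ α * γ * lam := by nlinarith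
    rw [pi_norm_le_iff_of_nonneg halgl]
    intro i
    rw [Pi.sub_apply, Real.norm_eq_abs]
    calc |softThresh lam (x i + Ψ.transpose.mulVec (y - Ψ.mulVec x) i) - xdag i|
        ≤ |softThresh lam (x i + Ψ.transpose.mulVec (y - Ψ.mulVec x) i)
            - (x i + Ψ.transpose.mulVec (y - Ψ.mulVec x) i)|
          + |(x i + Ψ.transpose.mulVec (y - Ψ.mulVec x) i) - xdag i| := by
          have := abs_sub_le
            (softThresh lam (x i + Ψ.transpose.mulVec (y - Ψ.mulVec x) i))
            (x i + Ψ.transpose.mulVec (y - Ψ.mulVec x) i) (xdag i)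
          linarith [this]
      _ ≤ lam + lam := add_le_add (abs_softThresh_sub_le hlam0) (hEi i)
      _ ≤ α * γ * lam := by nlinarith
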